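/- Let ζ < 0 and let Y be a real random variable with density ν(x) = a₋ e^{-x²/2} for x ≤ -ζ and ν(x) = a₊ e^{-|ζ| x} for x ≥ -ζ (continuous, normalized). Then E[ Y² 1{Y < -ζ} ] + |ζ| · E[ Y 1{Y ≥ -ζ} ] ≤ 1; in particular E[ Y 1{Y ≥ -ζ} ] ≤ 1/|ζ| and E[ |Y| 1{Y < -ζ} ] ≤ 1. -/

import Mathlib

open MeasureTheory Real Filter Set

lemma hIg : Integrable (fun y : ℝ => Real.exp (-y ^ 2 / 2)) := by
  have h := integrable_exp_neg_mul_sq (by norm_num : (0:ℝ) < 1/2)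
  refine h.congr (Filter.Eventually.of_forall fun x => ?_)
  show Real.exp (-(1/2) * x ^ 2) = Real.exp (-x ^ 2 / 2)
  rw [show -(1/2:ℝ) * x ^ 2 = -x ^ 2 / 2 by ring]

lemma hIg2 : Integrable (fun y : ℝ => y ^ 2 * Real.exp (-y ^ 2 / 2)) := by
  have h := integrable_rpow_mul_exp_neg_mul_sq (by norm_num : (0:ℝ) < 1/2)
    (by norm_num : (-1:ℝ) < 2)
  refine h.congr (Filter.Eventually.of_forall fun x => ?_)
  show x ^ (2:ℝ) * Real.exp (-(1/2) * x ^ 2) = x ^ 2 * Real.exp (-x ^ 2 / 2)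
  rw [Real.rpow_two, show -(1/2:ℝ) * x ^ 2 = -x ^ 2 / 2 by ring]

lemma hIg1 : Integrable (fun y : ℝ => |y| * Real.exp (-y ^ 2 / 2)) := by
  have h := (integrable_mul_exp_neg_mul_sq (by norm_num : (0:ℝ) < 1/2)).abs
  refine h.congr (Filter.Eventually.of_forall fun x => ?_)
  show |x * Real.exp (-(1/2) * x ^ 2)| = |x| * Real.exp (-x ^ 2 / 2)
  rw [abs_mul, abs_of_pos (Real.exp_pos _), show -(1/2:ℝ) * x ^ 2 = -x ^ 2 / 2 by ring]

lemma tendsto_aux : Tendsto (fun t : ℝ => t * Real.exp (-t ^ 2 / 2)) atTop (nhds 0) := by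
  have h := (rpow_mul_exp_neg_mul_sq_isLittleO_exp_neg
      (by norm_num : (0:ℝ) < 1/2) 1).tendsto_zero_of_tendsto
    (tendsto_exp_atBot.comp <| tendsto_id.const_mul_atTop_of_neg
      (neg_lt_zero.mpr one_half_pos))
  refine h.congr fun t => ?_
  rw [Real.rpow_one, show -(1/2:ℝ) * t ^ 2 = -t ^ 2 / 2 by ring]

lemma tendsto_aux_bot : Tendsto (fun y : ℝ => y * Real.exp (-y ^ 2 / 2)) atBot (nhds 0) := by
  have h := (tendsto_aux.comp tendsto_neg_atBot_atTop).neg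
  rw [neg_zero] at h
  refine h.congr fun y => ?_
  show -((-y) * Real.exp (-(-y) ^ 2 / 2)) = y * Real.exp (-y ^ 2 / 2)
  rw [neg_sq]; ring

lemma gauss_key (c : ℝ) :
    (∫ y in Set.Iic c, y ^ 2 * Real.exp (-y ^ 2 / 2)) =
      (∫ y in Set.Iic c, Real.exp (-y ^ 2 / 2)) - c * Real.exp (-c ^ 2 / 2) := by
  have hderiv : ∀ y ∈ Set.Iic c, HasDerivAt (fun y : ℝ => y * Real.exp (-y ^ 2 / 2))
      (Real.exp (-y ^ 2 / 2) - y ^ 2 * Real.exp (-y ^ 2 / 2)) y := by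
    intro y _
    have h1 : HasDerivAt (fun y : ℝ => -y ^ 2 / 2) (-y) y := by
      have h := (hasDerivAt_pow 2 y).neg.div_const 2
      refine h.congr_deriv ?_
      push_cast
      ring
    have h2 := (hasDerivAt_id y).mul h1.exp
    refine h2.congr_deriv ?_
    simp only [id_eq]
    ring
  have hint : IntegrableOn (fun y : ℝ =>
      Real.exp (-y ^ 2 / 2) - y ^ 2 * Real.exp (-y ^ 2 / 2)) (Set.Iic c) :=
    (hIg.sub hIg2).integrableOn
  have h := integral_Iic_of_hasDerivAt_of_tendsto' hderiv hint tendsto_aux_bot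
  rw [sub_zero] at h
  rw [integral_sub hIg.integrableOn hIg2.integrableOn] at h
  linarith [h]

lemma exp_key0 {c : ℝ} (hc : 0 < c) :
    (∫ y in Set.Ioi c, Real.exp (-(c * y))) = Real.exp (-c ^ 2) / c := by
  have hderiv : ∀ y ∈ Set.Ici c, HasDerivAt (fun y : ℝ => -(1/c) * Real.exp (-(c * y)))
      (Real.exp (-(c * y))) y := by
    intro y _
    have h1 : HasDerivAt (fun y : ℝ => -(c * y)) (-c) y := by
      have h := ((hasDerivAt_id y).const_mul c).neg
      refine h.congr_deriv ?_
      simp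
    have h2 := h1.exp.const_mul (-(1/c))
    refine h2.congr_deriv ?_
    field_simp
  have hpos : ∀ y ∈ Set.Ioi c, 0 ≤ Real.exp (-(c * y)) := fun y _ => (Real.exp_pos _).le
  have htend : Tendsto (fun y : ℝ => -(1/c) * Real.exp (-(c * y))) atTop (nhds 0) := by
    have h := tendsto_exp_atBot.comp (tendsto_id.const_mul_atTop_of_neg (neg_lt_zero.mpr hc))
    have h2 := h.const_mul (-(1/c))
    rw [mul_zero] at h2
    refine h2.congr fun y => ?_
    simp only [Function.comp, id_eq, neg_mul]
  have h := integral_Ioi_of_hasDerivAt_of_nonneg' hderiv hpos htend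
  rw [h, show c * c = c ^ 2 by ring]
  field_simp
  ring

lemma exp_key1 {c : ℝ} (hc : 0 < c) :
    (∫ y in Set.Ioi c, y * Real.exp (-(c * y))) = (1 + 1/c^2) * Real.exp (-c ^ 2) := by
  have hderiv : ∀ y ∈ Set.Ici c, HasDerivAt
      (fun y : ℝ => -((y/c + 1/c^2) * Real.exp (-(c * y))))
      (y * Real.exp (-(c * y))) y := by
    intro y _
    have h1 : HasDerivAt (fun y : ℝ => -(c * y)) (-c) y := by
      have h := ((hasDerivAt_id y).const_mul c).neg
      refine h.congr_deriv ?_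
      simp
    have h2 : HasDerivAt (fun y : ℝ => y/c + 1/c^2) (1/c) y :=
      ((hasDerivAt_id y).div_const c).add_const (1/c^2)
    have h3 := (h2.mul h1.exp).neg
    refine h3.congr_deriv ?_
    field_simp
    ring
  have hpos : ∀ y ∈ Set.Ioi c, 0 ≤ y * Real.exp (-(c * y)) := fun y hy =>
    mul_nonneg (le_of_lt (lt_trans hc hy)) (Real.exp_pos _).le
  have htend : Tendsto (fun y : ℝ => -((y/c + 1/c^2) * Real.exp (-(c * y)))) atTop (nhds 0) := by
    have ha : Tendsto (fun y : ℝ => (y/c) * Real.exp (-(c * y))) atTop (nhds 0) := by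
      have h := (tendsto_rpow_mul_exp_neg_mul_atTop_nhds_zero 1 c hc).div_const c
      rw [zero_div] at h
      refine h.congr fun y => ?_
      show y ^ (1:ℝ) * Real.exp (-c * y) / c = y / c * Real.exp (-(c * y))
      rw [Real.rpow_one, neg_mul]; ring
    have hb : Tendsto (fun y : ℝ => (1/c^2) * Real.exp (-(c * y))) atTop (nhds 0) := by
      have h := tendsto_exp_atBot.comp (tendsto_id.const_mul_atTop_of_neg (neg_lt_zero.mpr hc))
      have h2 := h.const_mul (1/c^2)
      rw [mul_zero] at h2
      refine h2.congr fun y => ?_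
      show (1/c^2) * Real.exp (-c * id y) = (1/c^2) * Real.exp (-(c * y))
      rw [id_eq, neg_mul]
    have h := (ha.add hb).neg
    rw [add_zero, neg_zero] at h
    refine h.congr fun y => ?_
    ring
  have h := integral_Ioi_of_hasDerivAt_of_nonneg' hderiv hpos htend
  rw [h, show c * c = c ^ 2 by ring]
  field_simp
  ring

theorem lyapunov_moment_bounds (ζ am ap : ℝ) (hζ : ζ < 0) (ham : 0 < am) (hap : 0 < ap)
    (hcont : am * Real.exp (-ζ ^ 2 / 2) = ap * Real.exp (-ζ ^ 2))
    (hnorm : am * (∫ y in Set.Iic (-ζ), Real.exp (-y ^ 2 / 2)) +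
        ap * (∫ y in Set.Ioi (-ζ), Real.exp (-|ζ| * y)) = 1) :
    (∫ y in Set.Iio (-ζ), y ^ 2 * (am * Real.exp (-y ^ 2 / 2))) +
        |ζ| * (∫ y in Set.Ici (-ζ), y * (ap * Real.exp (-|ζ| * y))) ≤ 1 ∧
      (∫ y in Set.Ici (-ζ), y * (ap * Real.exp (-|ζ| * y))) ≤ 1 / |ζ| ∧
      (∫ y in Set.Iio (-ζ), |y| * (am * Real.exp (-y ^ 2 / 2))) ≤ 1 := by
  obtain ⟨c, hc, rfl⟩ : ∃ c, 0 < c ∧ ζ = -c := ⟨-ζ, by linarith, by ring⟩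
  simp only [neg_neg, abs_neg, abs_of_pos hc, neg_sq, neg_mul] at hcont hnorm ⊢
  set I1 := ∫ y in Set.Iic c, Real.exp (-y ^ 2 / 2) with hI1
  rw [exp_key0 hc] at hnorm
  have hg1 : (∫ y in Set.Iio c, y ^ 2 * (am * Real.exp (-y ^ 2 / 2))) =
      am * (I1 - c * Real.exp (-c ^ 2 / 2)) := by
    rw [← integral_Iic_eq_integral_Iio, ← gauss_key c, ← integral_const_mul]
    congr 1; funext y; ring
  have hg2 : (∫ y in Set.Ici c, y * (ap * Real.exp (-(c * y)))) =
      ap * ((1 + 1/c^2) * Real.exp (-c ^ 2)) := by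
    rw [integral_Ici_eq_integral_Ioi, ← exp_key1 hc, ← integral_const_mul]
    congr 1; funext y; ring
  have hmain : (∫ y in Set.Iio c, y ^ 2 * (am * Real.exp (-y ^ 2 / 2))) +
      c * (∫ y in Set.Ici c, y * (ap * Real.exp (-(c * y)))) = 1 := by
    rw [hg1, hg2]
    have h2 : am * (c * Real.exp (-c ^ 2 / 2)) = ap * (c * Real.exp (-c ^ 2)) := by
      rw [← mul_assoc, ← mul_assoc, mul_comm am c, mul_comm ap c, mul_assoc, mul_assoc, hcont]
    have h3 : c * (ap * ((1 + 1/c^2) * Real.exp (-c ^ 2))) =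
        ap * (c * Real.exp (-c ^ 2)) + ap * (Real.exp (-c ^ 2) / c) := by
      field_simp
    linarith [hnorm, h2, h3, mul_sub am I1 (c * Real.exp (-c ^ 2 / 2))]
  have hA : 0 ≤ ∫ y in Set.Iio c, y ^ 2 * (am * Real.exp (-y ^ 2 / 2)) :=
    setIntegral_nonneg measurableSet_Iio fun y _ =>
      mul_nonneg (sq_nonneg y) (mul_nonneg ham.le (Real.exp_pos _).le)
  have hB : 0 ≤ ∫ y in Set.Ici c, y * (ap * Real.exp (-(c * y))) := by
    refine setIntegral_nonneg measurableSet_Ici fun y hy => ?_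
    exact mul_nonneg (le_trans hc.le hy) (mul_nonneg hap.le (Real.exp_pos _).le)
  refine ⟨le_of_eq hmain, ?_, ?_⟩
  · rw [le_div_iff₀ hc, mul_comm]
    nlinarith [hA, hmain]
  · have hintL : IntegrableOn (fun y : ℝ => |y| * (am * Real.exp (-y ^ 2 / 2))) (Set.Iio c) := by
      refine ((hIg1.const_mul am).congr (Filter.Eventually.of_forall fun y => ?_)).integrableOn
      show am * (|y| * Real.exp (-y ^ 2 / 2)) = |y| * (am * Real.exp (-y ^ 2 / 2)); ring
    have hintR : IntegrableOn (fun y : ℝ => (y ^ 2 * (am * Real.exp (-y ^ 2 / 2))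
        + am * Real.exp (-y ^ 2 / 2)) / 2) (Set.Iio c) := by
      refine ((((hIg2.const_mul am).add (hIg.const_mul am)).div_const 2).congr
        (Filter.Eventually.of_forall fun y => ?_)).integrableOn
      show (am * (y ^ 2 * Real.exp (-y ^ 2 / 2)) + am * Real.exp (-y ^ 2 / 2)) / 2 =
        (y ^ 2 * (am * Real.exp (-y ^ 2 / 2)) + am * Real.exp (-y ^ 2 / 2)) / 2
      ring
    have hmono : (∫ y in Set.Iio c, |y| * (am * Real.exp (-y ^ 2 / 2))) ≤
        ∫ y in Set.Iio c, (y ^ 2 * (am * Real.exp (-y ^ 2 / 2))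
          + am * Real.exp (-y ^ 2 / 2)) / 2 := by
      refine setIntegral_mono_on hintL hintR measurableSet_Iio fun y _ => ?_
      have h1 : 2 * |y| ≤ y ^ 2 + 1 := by nlinarith [sq_nonneg (|y| - 1), sq_abs y]
      have h2 : 0 ≤ am * Real.exp (-y ^ 2 / 2) := mul_nonneg ham.le (Real.exp_pos _).le
      nlinarith [mul_le_mul_of_nonneg_right h1 h2]
    have hsplit : (∫ y in Set.Iio c, (y ^ 2 * (am * Real.exp (-y ^ 2 / 2))
          + am * Real.exp (-y ^ 2 / 2)) / 2) =
        ((∫ y in Set.Iio c, y ^ 2 * (am * Real.exp (-y ^ 2 / 2))) + am * I1) / 2 := by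
      rw [integral_div, integral_add]
      · congr 2
        rw [← integral_Iic_eq_integral_Iio (μ := volume) (f := fun y : ℝ => am * Real.exp (-y ^ 2 / 2)) (x := c), ← integral_const_mul]
      · refine ((hIg2.const_mul am).congr (Filter.Eventually.of_forall fun y => ?_)).integrableOn
        show am * (y ^ 2 * Real.exp (-y ^ 2 / 2)) = y ^ 2 * (am * Real.exp (-y ^ 2 / 2)); ring
      · exact (hIg.const_mul am).integrableOn
    have hAle : (∫ y in Set.Iio c, y ^ 2 * (am * Real.exp (-y ^ 2 / 2))) ≤ am * I1 := by
      rw [hg1]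
      nlinarith [mul_nonneg ham.le (mul_nonneg hc.le (Real.exp_pos (-c^2/2)).le)]
    have hI1le : am * I1 ≤ 1 := by
      nlinarith [mul_nonneg hap.le (div_nonneg (Real.exp_pos (-c^2)).le hc.le)]
    calc (∫ y in Set.Iio c, |y| * (am * Real.exp (-y ^ 2 / 2)))
        ≤ _ := hmono
      _ = _ := hsplit
      _ ≤ 1 := by linarith
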